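/- Let d ≥ 1 be an integer and let α > d and λ > 0 be reals. There exists a constant c > 0, depending only on d, α and λ, such that for every probability space, every random variable W with W ≥ 1 almost surely, and all reals w ≥ 1 and u ≥ 1: ∑_{y ∈ ℤ^d, y ≠ 0} E[ 1{W ≥ u}·(1 − exp(−λ·w·W·‖y‖^{−α})) ] ≤ c·w^{d/α}·E[ W^{d/α}·1{W ≥ u} ]. -/

import Mathlib

open MeasureTheory
open scoped ENNReal
open Filter

lemma exp_min_bound (t : ℝ) (ht : 0 ≤ t) : 1 - Real.exp (-t) ≤ min 1 t := by
  have h1 : 1 - Real.exp (-t) ≤ 1 := by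
    have := Real.exp_pos (-t); linarith
  have h2 : 1 - Real.exp (-t) ≤ t := by
    have := Real.add_one_le_exp (-t); linarith
  exact le_min h1 h2

lemma rpow_diff_upper (x s : ℝ) (hx : 0 < x) (hs : 0 < s) :
    x ^ (-s) - (x + 1) ^ (-s) ≤ s * x ^ (-(s + 1)) := by
  have hx1 : (0:ℝ) < x + 1 := by linarith
  have hq : (0:ℝ) < (x + 1) / x := by positivity
  have h1 : (x + 1) ^ (-s) = x ^ (-s) * ((x + 1) / x) ^ (-s) := by
    rw [← Real.mul_rpow hx.le hq.le]
    congr 1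
    field_simp
  have hlog : Real.log ((x + 1) / x) ≤ 1 / x := by
    have h := Real.log_le_sub_one_of_pos hq
    have : (x + 1) / x - 1 = 1 / x := by field_simp; ring
    linarith
  have hexp : 1 - s * (1 / x) ≤ ((x + 1) / x) ^ (-s) := by
    rw [Real.rpow_def_of_pos hq]
    have h2 := Real.add_one_le_exp (Real.log ((x + 1) / x) * (-s))
    have h3 : -(s * (1/x)) ≤ Real.log ((x+1)/x) * (-s) := by
      have := mul_le_mul_of_nonneg_left hlog hs.le
      nlinarith
    linarith
  have hxs : (0:ℝ) ≤ x ^ (-s) := Real.rpow_nonneg hx.le _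
  have key : x ^ (-s) - (x + 1) ^ (-s) ≤ x ^ (-s) * (s * (1 / x)) := by
    rw [h1]
    have := mul_le_mul_of_nonneg_left hexp hxs
    nlinarith
  have : x ^ (-s) * (s * (1 / x)) = s * x ^ (-(s + 1)) := by
    rw [show -(s + 1) = -s + (-1) by ring, Real.rpow_add hx, Real.rpow_neg_one]
    field_simp
  linarith

lemma rpow_diff_lower (x s : ℝ) (hx : 0 < x) (hs : 0 < s) :
    s * (x + 1) ^ (-(s + 1)) ≤ x ^ (-s) - (x + 1) ^ (-s) := by
  have hx1 : (0:ℝ) < x + 1 := by linarith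
  have hq : (0:ℝ) < x / (x + 1) := by positivity
  have h1 : x ^ (-s) = (x + 1) ^ (-s) * (x / (x + 1)) ^ (-s) := by
    rw [← Real.mul_rpow hx1.le hq.le]
    congr 1
    field_simp
  have hlog : Real.log (x / (x + 1)) ≤ -(1 / (x + 1)) := by
    have h := Real.log_le_sub_one_of_pos hq
    have : x / (x + 1) - 1 = -(1 / (x + 1)) := by field_simp; ring
    linarith
  have hexp : 1 + s * (1 / (x + 1)) ≤ (x / (x + 1)) ^ (-s) := by
    rw [Real.rpow_def_of_pos hq]
    have h2 := Real.add_one_le_exp (Real.log (x / (x + 1)) * (-s))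
    have h3 : s * (1 / (x + 1)) ≤ Real.log (x / (x + 1)) * (-s) := by
      have := mul_le_mul_of_nonneg_left hlog hs.le
      nlinarith
    linarith
  have hxs : (0:ℝ) ≤ (x + 1) ^ (-s) := Real.rpow_nonneg hx1.le _
  have key : (x + 1) ^ (-s) * (s * (1 / (x + 1))) ≤ x ^ (-s) - (x + 1) ^ (-s) := by
    rw [h1]
    have := mul_le_mul_of_nonneg_left hexp hxs
    nlinarith
  have : (x + 1) ^ (-s) * (s * (1 / (x + 1))) = s * (x + 1) ^ (-(s + 1)) := by
    rw [show -(s + 1) = -s + (-1) by ring, Real.rpow_add hx1, Real.rpow_neg_one]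
    field_simp
  linarith

lemma min_one_sub_le (a b : ℝ) (hba : b ≤ a) : min 1 a - min 1 b ≤ a - b := by
  simp only [min_def]
  split_ifs <;> linarith

lemma real_tele (g : ℕ → ℝ) (M : ℕ) (N : ℕ) :
    ∑ k ∈ Finset.range N, (if M ≤ k then g k - g (k + 1) else 0) = g M - g (max M N) := by
  induction N with
  | zero => simp
  | succ N ih =>
    rw [Finset.sum_range_succ, ih]
    rcases le_or_gt M N with h | h
    · rw [if_pos h, max_eq_right h, max_eq_right (le_trans h (Nat.le_succ N))]
      ring
    · rw [if_neg (not_le.mpr h), max_eq_left h.le, max_eq_left h]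
      ring

lemma sum_ite_ofReal (g : ℕ → ℝ) (M : ℕ) (hg : ∀ k, M ≤ k → g (k + 1) ≤ g k) (N : ℕ) :
    ∑ k ∈ Finset.range N, (if M ≤ k then ENNReal.ofReal (g k - g (k + 1)) else 0)
      = ENNReal.ofReal (g M - g (max M N)) := by
  have h1 : ∑ k ∈ Finset.range N, (if M ≤ k then ENNReal.ofReal (g k - g (k + 1)) else 0)
      = ENNReal.ofReal (∑ k ∈ Finset.range N, if M ≤ k then g k - g (k + 1) else 0) := by
    rw [ENNReal.ofReal_sum_of_nonneg]
    · apply Finset.sum_congr rfl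
      intro k _
      split_ifs <;> simp
    · intro k _
      split_ifs with h
      · linarith [hg k h]
      · exact le_refl 0
  rw [h1, real_tele]

lemma tsum_tele_le (g : ℕ → ℝ) (M : ℕ) (hg : ∀ k, M ≤ k → g (k + 1) ≤ g k)
    (h0 : ∀ k, M ≤ k → 0 ≤ g k) :
    ∑' k, (if M ≤ k then ENNReal.ofReal (g k - g (k + 1)) else 0) ≤ ENNReal.ofReal (g M) := by
  rw [ENNReal.tsum_eq_iSup_nat]
  apply iSup_le
  intro N
  rw [sum_ite_ofReal g M hg]
  exact ENNReal.ofReal_le_ofReal (by linarith [h0 (max M N) (le_max_left M N)])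

lemma tsum_tele_eq (g : ℕ → ℝ) (hg : ∀ k, g (k + 1) ≤ g k)
    (hlim : Tendsto g atTop (nhds 0)) (n : ℕ) :
    ENNReal.ofReal (g n) = ∑' k, (if n ≤ k then ENNReal.ofReal (g k - g (k + 1)) else 0) := by
  have hant : Antitone g := antitone_nat_of_succ_le hg
  have h0 : ∀ m, 0 ≤ g m := by
    intro m
    exact le_of_tendsto hlim (Filter.eventually_atTop.mpr ⟨m, fun k hk => hant hk⟩)
  rw [ENNReal.tsum_eq_iSup_nat]
  have key : ∀ N, ∑ k ∈ Finset.range N, (if n ≤ k then ENNReal.ofReal (g k - g (k + 1)) else 0)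
      = ENNReal.ofReal (g n - g (max n N)) := sum_ite_ofReal g n (fun k _ => hg k)
  apply le_antisymm
  · have hmax : Tendsto (fun N => max n N) atTop atTop :=
      tendsto_atTop_mono (fun N => le_max_right n N) tendsto_id
    have htend : Tendsto (fun N => ENNReal.ofReal (g n - g (max n N))) atTop
        (nhds (ENNReal.ofReal (g n - 0))) :=
      ENNReal.tendsto_ofReal (tendsto_const_nhds.sub (hlim.comp hmax))
    rw [sub_zero] at htend
    refine le_of_tendsto htend (Filter.Eventually.of_forall fun N => ?_)
    rw [← key N]
    exact le_iSup (fun N => ∑ k ∈ Finset.range N,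
      (if n ≤ k then ENNReal.ofReal (g k - g (k + 1)) else 0)) N
  · apply iSup_le
    intro N
    rw [key N]
    exact ENNReal.ofReal_le_ofReal (by linarith [h0 (max n N)])

lemma tail_sum (ε : ℝ) (hε : 0 < ε) (M : ℕ) (hM : 1 ≤ M) :
    ∑' k : ℕ, (if M ≤ k then ENNReal.ofReal ((k : ℝ) ^ (-(1 + ε))) else 0)
      ≤ ENNReal.ofReal (2 ^ (1 + ε) / ε * (M : ℝ) ^ (-ε)) := by
  set c2 : ℝ := 2 ^ (1 + ε) with hc2def
  have hc2 : (0:ℝ) < c2 := Real.rpow_pos_of_pos two_pos _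
  have key : ∀ k : ℕ, (if M ≤ k then ENNReal.ofReal ((k : ℝ) ^ (-(1 + ε))) else 0)
      ≤ ENNReal.ofReal (c2 / ε) *
        (if M ≤ k then ENNReal.ofReal ((k : ℝ) ^ (-ε) - ((k : ℝ) + 1) ^ (-ε)) else 0) := by
    intro k
    split_ifs with h
    · have hk : (1:ℝ) ≤ (k:ℝ) := by exact_mod_cast le_trans hM h
      have hkpos : (0:ℝ) < (k:ℝ) := by linarith
      have h2 := rpow_diff_lower (k:ℝ) ε hkpos hε
      have h3 : (2:ℝ) ^ (-(1 + ε)) * (k:ℝ) ^ (-(1 + ε)) ≤ ((k:ℝ) + 1) ^ (-(1 + ε)) := by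
        rw [← Real.mul_rpow two_pos.le hkpos.le]
        exact Real.rpow_le_rpow_of_nonpos (by linarith) (by linarith) (by linarith)
      have hinv : (2:ℝ) ^ (-(1 + ε)) = c2⁻¹ := by
        rw [hc2def, ← Real.rpow_neg two_pos.le]
      rw [← ENNReal.ofReal_mul (by positivity)]
      apply ENNReal.ofReal_le_ofReal
      have hmain : ε * (c2⁻¹ * (k:ℝ) ^ (-(1 + ε))) ≤ (k:ℝ) ^ (-ε) - ((k:ℝ) + 1) ^ (-ε) := by
        rw [← hinv]
        calc ε * ((2:ℝ) ^ (-(1 + ε)) * (k:ℝ) ^ (-(1 + ε)))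
            ≤ ε * ((k:ℝ) + 1) ^ (-(1 + ε)) := mul_le_mul_of_nonneg_left h3 hε.le
          _ = ε * ((k:ℝ) + 1) ^ (-(ε + 1)) := by ring_nf
          _ ≤ _ := h2
      calc (k:ℝ) ^ (-(1 + ε)) = c2 / ε * (ε * (c2⁻¹ * (k:ℝ) ^ (-(1 + ε)))) := by
            field_simp
        _ ≤ c2 / ε * ((k:ℝ) ^ (-ε) - ((k:ℝ) + 1) ^ (-ε)) :=
            mul_le_mul_of_nonneg_left hmain (by positivity)
    · simp
  calc ∑' k : ℕ, (if M ≤ k then ENNReal.ofReal ((k : ℝ) ^ (-(1 + ε))) else 0)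
      ≤ ∑' k : ℕ, ENNReal.ofReal (c2 / ε) *
          (if M ≤ k then ENNReal.ofReal ((k : ℝ) ^ (-ε) - ((k : ℝ) + 1) ^ (-ε)) else 0) :=
        ENNReal.tsum_le_tsum key
    _ = ENNReal.ofReal (c2 / ε) * ∑' k : ℕ,
          (if M ≤ k then ENNReal.ofReal ((k : ℝ) ^ (-ε) - ((k : ℝ) + 1) ^ (-ε)) else 0) :=
        ENNReal.tsum_mul_left
    _ ≤ ENNReal.ofReal (c2 / ε) * ENNReal.ofReal ((M:ℝ) ^ (-ε)) := by
        apply mul_le_mul_right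
        have := tsum_tele_le (fun k => (k:ℝ) ^ (-ε)) M ?_ ?_
        · convert this using 3
          push_cast
          ring_nf
        · intro k hk
          have hkpos : (0:ℝ) < (k:ℝ) := by
            have : (1:ℝ) ≤ (k:ℝ) := by exact_mod_cast le_trans hM hk
            linarith
          exact Real.rpow_le_rpow_of_nonpos hkpos (by push_cast; linarith) (by linarith)
        · intro k _
          exact Real.rpow_nonneg (Nat.cast_nonneg k) _
    _ = ENNReal.ofReal (c2 / ε * (M:ℝ) ^ (-ε)) := by
        rw [← ENNReal.ofReal_mul (by positivity)]
/-- The Euclidean norm of a point of the integer lattice `ℤ^d`. -/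
noncomputable def euclNorm {d : ℕ} (y : Fin d → ℤ) : ℝ :=
  Real.sqrt (∑ i, ((y i : ℝ)) ^ 2)

def mnorm {d : ℕ} (y : Fin d → ℤ) : ℕ := Finset.univ.sup fun i => (y i).natAbs

lemma one_le_mnorm {d : ℕ} {y : Fin d → ℤ} (hy : y ≠ 0) : 1 ≤ mnorm y := by
  obtain ⟨i, hi⟩ := Function.ne_iff.mp hy
  have h1 : 1 ≤ (y i).natAbs := Int.natAbs_pos.mpr (by simpa using hi)
  have h2 : (y i).natAbs ≤ mnorm y := by
    exact Finset.le_sup (f := fun i => (y i).natAbs) (Finset.mem_univ i)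
  exact le_trans h1 h2

lemma mnorm_le_euclNorm {d : ℕ} (hd : 1 ≤ d) (y : Fin d → ℤ) :
    (mnorm y : ℝ) ≤ euclNorm y := by
  have hne : (Finset.univ : Finset (Fin d)).Nonempty := by
    have : Nonempty (Fin d) := Fin.pos_iff_nonempty.mp hd
    exact Finset.univ_nonempty
  obtain ⟨i, _, hi⟩ := Finset.exists_mem_eq_sup Finset.univ hne (fun i => (y i).natAbs)
  have h1 : ((mnorm y : ℕ) : ℝ) = |((y i : ℤ) : ℝ)| := by
    rw [mnorm, hi, Nat.cast_natAbs, Int.cast_abs]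
  rw [euclNorm, h1, ← Real.sqrt_sq_eq_abs]
  apply Real.sqrt_le_sqrt
  exact Finset.single_le_sum (f := fun j => (((y j : ℤ) : ℝ)) ^ 2)
    (fun j _ => sq_nonneg _) (Finset.mem_univ i)

noncomputable def cube (d k : ℕ) : Finset (Fin d → ℤ) := Fintype.piFinset fun _ => Finset.Icc (-(k : ℤ)) k

lemma mem_cube {d k : ℕ} (y : Fin d → ℤ) : y ∈ cube d k ↔ mnorm y ≤ k := by
  simp only [cube, Fintype.mem_piFinset, Finset.mem_Icc, mnorm, Finset.sup_le_iff,
    Finset.mem_univ, true_implies]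
  exact forall_congr' fun i => by omega

lemma card_cube (d k : ℕ) : (cube d k).card = (2 * k + 1) ^ d := by
  rw [cube, Fintype.card_piFinset]
  simp only [Int.card_Icc]
  have h1 : ((k : ℤ) + 1 - -(k : ℤ)).toNat = 2 * k + 1 := by omega
  rw [h1]
  simp

lemma nat_cube_bound (d k : ℕ) : (2 * k + 1) ^ d - 1 ≤ 3 ^ d * k ^ d := by
  cases k with
  | zero => simp
  | succ n =>
    calc (2 * (n + 1) + 1) ^ d - 1 ≤ (2 * (n + 1) + 1) ^ d := Nat.sub_le _ _
      _ ≤ (3 * (n + 1)) ^ d := Nat.pow_le_pow_left (by omega) d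
      _ = 3 ^ d * (n + 1) ^ d := mul_pow 3 (n + 1) d
lemma lattice_bound (d : ℕ) (hd : 1 ≤ d) (α : ℝ) (hα : (d : ℝ) < α) :
    ∃ C > (0:ℝ), ∀ A : ℝ, 1 ≤ A →
      (∑' y : {y : Fin d → ℤ // y ≠ 0}, ENNReal.ofReal (min 1 (A * euclNorm y.1 ^ (-α))))
        ≤ ENNReal.ofReal (C * A ^ ((d : ℝ) / α)) := by
  have hd0 : (0:ℝ) < d := by
    have : 0 < d := hd
    exact_mod_cast this
  have hα0 : (0:ℝ) < α := lt_trans hd0 hα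
  set ε : ℝ := α - d with hεdef
  have hε : 0 < ε := by rw [hεdef]; linarith
  refine ⟨(3:ℝ) ^ d * α * (2 ^ (1 + ε) / ε) * 2 ^ ε, by positivity, ?_⟩
  intro A hA
  have hA0 : (0:ℝ) < A := by linarith
  set φ : ℕ → ℝ := fun n => min 1 (A * ((max n 1 : ℕ) : ℝ) ^ (-α)) with hφdef
  have hφnonneg : ∀ n, 0 ≤ φ n := fun n => le_min zero_le_one (by positivity)
  have hmaxpos : ∀ n : ℕ, (0:ℝ) < ((max n 1 : ℕ) : ℝ) := fun n => by
    have h := le_max_right n 1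
    have : 0 < max n 1 := lt_of_lt_of_le Nat.zero_lt_one h
    exact_mod_cast this
  have hφanti : ∀ k, φ (k + 1) ≤ φ k := by
    intro k
    apply min_le_min (le_refl 1)
    apply mul_le_mul_of_nonneg_left _ hA0.le
    apply Real.rpow_le_rpow_of_nonpos (hmaxpos k) _ (by linarith)
    exact_mod_cast max_le_max (Nat.le_succ k) (le_refl 1)
  have hφlim : Filter.Tendsto φ Filter.atTop (nhds 0) := by
    have h2 : Filter.Tendsto (fun n : ℕ => ((max n 1 : ℕ) : ℝ)) Filter.atTop Filter.atTop :=
      tendsto_natCast_atTop_atTop.comp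
        (Filter.tendsto_atTop_mono (fun n => le_max_left n 1) Filter.tendsto_id)
    have h3 := (tendsto_rpow_neg_atTop hα0).comp h2
    have h1 : Filter.Tendsto (fun n : ℕ => A * ((max n 1 : ℕ) : ℝ) ^ (-α))
        Filter.atTop (nhds 0) := by
      have := h3.const_mul A
      simpa using this
    exact tendsto_of_tendsto_of_tendsto_of_le_of_le tendsto_const_nhds h1
      (fun n => hφnonneg n) (fun n => min_le_right _ _)
  set D : ℕ → ℝ≥0∞ := fun k => ENNReal.ofReal (φ k - φ (k + 1)) with hDdef
  -- Step 1 : compare with the profile of the sup-norm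
  have step1 : (∑' y : {y : Fin d → ℤ // y ≠ 0},
        ENNReal.ofReal (min 1 (A * euclNorm y.1 ^ (-α))))
      ≤ ∑' y : {y : Fin d → ℤ // y ≠ 0}, ENNReal.ofReal (φ (mnorm y.1)) := by
    apply ENNReal.tsum_le_tsum
    intro y
    apply ENNReal.ofReal_le_ofReal
    have h1 : 1 ≤ mnorm y.1 := one_le_mnorm y.2
    have h2 : (0:ℝ) < (mnorm y.1 : ℝ) := by exact_mod_cast h1
    have hmm : ((max (mnorm y.1) 1 : ℕ) : ℝ) = (mnorm y.1 : ℝ) := by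
      rw [max_eq_left h1]
    show min 1 (A * euclNorm y.1 ^ (-α)) ≤ min 1 (A * ((max (mnorm y.1) 1 : ℕ) : ℝ) ^ (-α))
    rw [hmm]
    apply min_le_min (le_refl 1)
    apply mul_le_mul_of_nonneg_left _ hA0.le
    exact Real.rpow_le_rpow_of_nonpos h2 (mnorm_le_euclNorm hd y.1) (by linarith)
  -- Step 2 : layer-cake
  have step2 : ∀ y : {y : Fin d → ℤ // y ≠ 0},
      ENNReal.ofReal (φ (mnorm y.1)) = ∑' k, (if mnorm y.1 ≤ k then D k else 0) :=
    fun y => tsum_tele_eq φ hφanti hφlim (mnorm y.1)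
  -- Step 4 : counting
  have step4 : ∀ k, (∑' y : {y : Fin d → ℤ // y ≠ 0}, (if mnorm y.1 ≤ k then D k else 0))
      ≤ ((3 ^ d * k ^ d : ℕ) : ℝ≥0∞) * D k := by
    intro k
    set F : (Fin d → ℤ) → ℝ≥0∞ := fun z => if z ≠ 0 ∧ mnorm z ≤ k then D k else 0 with hF
    have h1 : (∑' y : {y : Fin d → ℤ // y ≠ 0}, (if mnorm y.1 ≤ k then D k else 0))
        = ∑' y : {y : Fin d → ℤ // y ≠ 0}, F y.1 := by
      apply tsum_congr
      intro y
      simp [hF, y.2]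
    have h2 : (∑' y : ({z : Fin d → ℤ | z ≠ 0} : Set (Fin d → ℤ)), F y.1) = ∑' z, F z := by
      apply tsum_subtype_eq_of_support_subset
      intro z hz
      simp only [Function.mem_support] at hz
      by_contra h0
      apply hz
      simp only [Set.mem_setOf_eq] at h0
      push_neg at h0
      simp [hF, h0]
    have h3 : ∑' z, F z = ∑ z ∈ cube d k, F z := by
      apply tsum_eq_sum
      intro z hz
      simp only [hF]
      apply if_neg
      intro hcon
      exact hz ((mem_cube z).mpr hcon.2)
    have h0cube : (0 : Fin d → ℤ) ∈ cube d k := (mem_cube 0).mpr (by simp [mnorm])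
    have h4 : ∑ z ∈ cube d k, F z = ∑ z ∈ (cube d k).erase 0, F z :=
      (Finset.sum_erase _ (by simp [hF])).symm
    have h5 : ∑ z ∈ (cube d k).erase 0, F z ≤ ∑ z ∈ (cube d k).erase 0, D k :=
      Finset.sum_le_sum fun z _ => by
        simp only [hF]
        split_ifs
        · exact le_refl _
        · exact bot_le
    have h6 : ∑ z ∈ (cube d k).erase 0, D k = (((cube d k).erase 0).card : ℝ≥0∞) * D k := by
      rw [Finset.sum_const, nsmul_eq_mul]
    have h7 : ((cube d k).erase 0).card = (2 * k + 1) ^ d - 1 := by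
      rw [Finset.card_erase_of_mem h0cube, card_cube]
    have h8 : (((cube d k).erase 0).card : ℝ≥0∞) ≤ ((3 ^ d * k ^ d : ℕ) : ℝ≥0∞) := by
      rw [h7]
      exact_mod_cast Nat.cast_le.mpr (nat_cube_bound d k)
    calc (∑' y : {y : Fin d → ℤ // y ≠ 0}, (if mnorm y.1 ≤ k then D k else 0))
        = ∑' z, F z := by
          rw [h1]
          exact h2
      _ = ∑ z ∈ (cube d k).erase 0, F z := by rw [h3, h4]
      _ ≤ (((cube d k).erase 0).card : ℝ≥0∞) * D k := by rw [← h6]; exact h5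
      _ ≤ ((3 ^ d * k ^ d : ℕ) : ℝ≥0∞) * D k := mul_le_mul_left h8 _
  -- Step 5 : per-k analytic bound
  set M := ⌊A ^ (1 / α)⌋₊ with hMdef
  have hx1 : (1:ℝ) ≤ A ^ (1 / α) := by
    have := Real.rpow_le_rpow_of_exponent_le hA (by positivity : (0:ℝ) ≤ 1 / α)
    rwa [Real.rpow_zero] at this
  have hM1 : 1 ≤ M := Nat.le_floor (by exact_mod_cast hx1)
  have step5 : ∀ k, ((3 ^ d * k ^ d : ℕ) : ℝ≥0∞) * D k
      ≤ ENNReal.ofReal ((3:ℝ) ^ d * α * A) *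
        (if M ≤ k then ENNReal.ofReal ((k : ℝ) ^ (-(1 + ε))) else 0) := by
    intro k
    rcases Nat.eq_zero_or_pos k with rfl | hk
    · have hzp : (0:ℕ) ^ d = 0 := zero_pow (by omega)
      simp [hzp]
    · have hk1 : (1:ℝ) ≤ (k:ℝ) := by exact_mod_cast hk
      have hkpos : (0:ℝ) < (k:ℝ) := by linarith
      have hmaxk : ((max k 1 : ℕ) : ℝ) = (k : ℝ) := by
        have h : max k 1 = k := max_eq_left hk
        rw [h]
      have hmaxk1 : ((max (k + 1) 1 : ℕ) : ℝ) = (k : ℝ) + 1 := by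
        have h : max (k + 1) 1 = k + 1 := max_eq_left (by omega)
        rw [h]
        push_cast
        ring
      by_cases hMk : M ≤ k
      · rw [if_pos hMk]
        have hab : A * ((k:ℝ) + 1) ^ (-α) ≤ A * (k:ℝ) ^ (-α) :=
          mul_le_mul_of_nonneg_left
            (Real.rpow_le_rpow_of_nonpos hkpos (by linarith) (by linarith)) hA0.le
        have hDle : φ k - φ (k + 1) ≤ α * A * (k:ℝ) ^ (-(α + 1)) := by
          have h1 : φ k - φ (k + 1) ≤ A * (k:ℝ) ^ (-α) - A * ((k:ℝ) + 1) ^ (-α) := by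
            have hm := min_one_sub_le (A * (k:ℝ) ^ (-α)) (A * ((k:ℝ) + 1) ^ (-α)) hab
            show min 1 (A * ((max k 1 : ℕ) : ℝ) ^ (-α))
                - min 1 (A * ((max (k + 1) 1 : ℕ) : ℝ) ^ (-α)) ≤ _
            rw [hmaxk, hmaxk1]
            exact hm
          have h2 := rpow_diff_upper (k:ℝ) α hkpos hα0
          calc φ k - φ (k + 1) ≤ A * ((k:ℝ) ^ (-α) - ((k:ℝ) + 1) ^ (-α)) := by linarith
            _ ≤ A * (α * (k:ℝ) ^ (-(α + 1))) := mul_le_mul_of_nonneg_left h2 hA0.le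
            _ = α * A * (k:ℝ) ^ (-(α + 1)) := by ring
        have hD : D k ≤ ENNReal.ofReal (α * A * (k:ℝ) ^ (-(α + 1))) :=
          ENNReal.ofReal_le_ofReal hDle
        have hk2 : (k:ℝ) ^ ((d : ℕ) : ℝ) * (k:ℝ) ^ (-(α + 1)) = (k:ℝ) ^ (-(1 + ε)) := by
          rw [← Real.rpow_add hkpos]
          congr 1
          rw [hεdef]
          ring
        calc ((3 ^ d * k ^ d : ℕ) : ℝ≥0∞) * D k
            ≤ ((3 ^ d * k ^ d : ℕ) : ℝ≥0∞) * ENNReal.ofReal (α * A * (k:ℝ) ^ (-(α + 1))) :=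
              mul_le_mul_right hD _
          _ = ENNReal.ofReal (((3 ^ d * k ^ d : ℕ) : ℝ) * (α * A * (k:ℝ) ^ (-(α + 1)))) := by
              rw [← ENNReal.ofReal_natCast (3 ^ d * k ^ d),
                ← ENNReal.ofReal_mul (by positivity)]
          _ = ENNReal.ofReal ((3:ℝ) ^ d * α * A * (k:ℝ) ^ (-(1 + ε))) := by
              congr 1
              push_cast
              rw [← Real.rpow_natCast (k:ℝ) d]
              rw [show (3:ℝ) ^ d * (k:ℝ) ^ ((d : ℕ) : ℝ) * (α * A * (k:ℝ) ^ (-(α + 1)))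
                  = (3:ℝ) ^ d * α * A * ((k:ℝ) ^ ((d : ℕ) : ℝ) * (k:ℝ) ^ (-(α + 1))) by ring]
              rw [hk2]
          _ = ENNReal.ofReal ((3:ℝ) ^ d * α * A) * ENNReal.ofReal ((k:ℝ) ^ (-(1 + ε))) :=
              ENNReal.ofReal_mul (p := (3:ℝ) ^ d * α * A) (by positivity)
      · rw [if_neg hMk]
        have hk1M : (k:ℝ) + 1 ≤ A ^ (1 / α) := by
          have hkM : k + 1 ≤ M := by omega
          have h2 : ((k + 1 : ℕ) : ℝ) ≤ (M : ℝ) := by exact_mod_cast hkM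
          have h3 : (M : ℝ) ≤ A ^ (1 / α) := Nat.floor_le (by positivity)
          push_cast at h2
          linarith
        have hone : 1 ≤ A * ((k:ℝ) + 1) ^ (-α) := by
          have h4 : ((k:ℝ) + 1) ^ α ≤ (A ^ (1 / α)) ^ α :=
            Real.rpow_le_rpow (by linarith) hk1M hα0.le
          have h5 : (A ^ (1 / α)) ^ α = A := by
            rw [← Real.rpow_mul hA0.le, one_div, inv_mul_cancel₀ (ne_of_gt hα0),
              Real.rpow_one]
          have h7 : ((k:ℝ) + 1) ^ α * ((k:ℝ) + 1) ^ (-α) = 1 := by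
            rw [← Real.rpow_add (by linarith)]
            simp
          have h8 : (0:ℝ) ≤ ((k:ℝ) + 1) ^ (-α) := Real.rpow_nonneg (by linarith) _
          calc (1:ℝ) = ((k:ℝ) + 1) ^ α * ((k:ℝ) + 1) ^ (-α) := h7.symm
            _ ≤ A * ((k:ℝ) + 1) ^ (-α) := by
                apply mul_le_mul_of_nonneg_right _ h8
                rw [h5] at h4
                exact h4
        have hφk1 : φ (k + 1) = 1 := by
          show min 1 (A * ((max (k + 1) 1 : ℕ) : ℝ) ^ (-α)) = 1
          rw [hmaxk1]
          exact min_eq_left hone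
        have hφk : φ k = 1 := le_antisymm (min_le_left _ _) (hφk1 ▸ hφanti k)
        have hD0 : D k = 0 := by
          rw [hDdef]
          simp [hφk, hφk1]
        simp [hD0]
  -- final real inequality
  have hkey : A * (M:ℝ) ^ (-ε) ≤ 2 ^ ε * A ^ ((d:ℝ) / α) := by
    set x : ℝ := A ^ (1 / α) with hxdef
    have hx2 : x / 2 ≤ (M:ℝ) := by
      rcases le_or_gt x 2 with h | h
      · have h1 : (1:ℝ) ≤ (M:ℝ) := by exact_mod_cast hM1
        linarith
      · have h2 := Nat.sub_one_lt_floor x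
        rw [← hMdef] at h2
        linarith
    have hx20 : (0:ℝ) < x / 2 := by linarith
    have h1 : (M:ℝ) ^ (-ε) ≤ (x / 2) ^ (-ε) :=
      Real.rpow_le_rpow_of_nonpos hx20 hx2 (by linarith)
    have h2 : (x / 2) ^ (-ε) = 2 ^ ε * x ^ (-ε) := by
      rw [Real.div_rpow (by linarith) (by norm_num), Real.rpow_neg (by norm_num : (0:ℝ) ≤ 2)]
      field_simp
    have h3 : x ^ (-ε) = A ^ (-(ε / α)) := by
      rw [hxdef, ← Real.rpow_mul hA0.le]
      congr 1
      field_simp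
    have h4 : A * A ^ (-(ε / α)) = A ^ ((d:ℝ) / α) := by
      nth_rewrite 1 [← Real.rpow_one A]
      rw [← Real.rpow_add hA0]
      congr 1
      rw [hεdef]
      field_simp
      ring
    calc A * (M:ℝ) ^ (-ε) ≤ A * (2 ^ ε * x ^ (-ε)) := by
          apply mul_le_mul_of_nonneg_left _ hA0.le
          rw [← h2]
          exact h1
      _ = 2 ^ ε * (A * A ^ (-(ε / α))) := by rw [h3]; ring
      _ = 2 ^ ε * A ^ ((d:ℝ) / α) := by rw [h4]
  -- assemble
  calc (∑' y : {y : Fin d → ℤ // y ≠ 0},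
        ENNReal.ofReal (min 1 (A * euclNorm y.1 ^ (-α))))
      ≤ ∑' y : {y : Fin d → ℤ // y ≠ 0}, ENNReal.ofReal (φ (mnorm y.1)) := step1
    _ = ∑' y : {y : Fin d → ℤ // y ≠ 0}, ∑' k, (if mnorm y.1 ≤ k then D k else 0) :=
        tsum_congr step2
    _ = ∑' k, ∑' y : {y : Fin d → ℤ // y ≠ 0}, (if mnorm y.1 ≤ k then D k else 0) :=
        ENNReal.tsum_comm
    _ ≤ ∑' k, ((3 ^ d * k ^ d : ℕ) : ℝ≥0∞) * D k := ENNReal.tsum_le_tsum step4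
    _ ≤ ∑' k, ENNReal.ofReal ((3:ℝ) ^ d * α * A) *
          (if M ≤ k then ENNReal.ofReal ((k : ℝ) ^ (-(1 + ε))) else 0) :=
        ENNReal.tsum_le_tsum step5
    _ = ENNReal.ofReal ((3:ℝ) ^ d * α * A) *
          ∑' k, (if M ≤ k then ENNReal.ofReal ((k : ℝ) ^ (-(1 + ε))) else 0) :=
        ENNReal.tsum_mul_left
    _ ≤ ENNReal.ofReal ((3:ℝ) ^ d * α * A) *
          ENNReal.ofReal (2 ^ (1 + ε) / ε * (M:ℝ) ^ (-ε)) :=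
        mul_le_mul_right (tail_sum ε hε M hM1) _
    _ = ENNReal.ofReal ((3:ℝ) ^ d * α * A * (2 ^ (1 + ε) / ε * (M:ℝ) ^ (-ε))) :=
        (ENNReal.ofReal_mul (by positivity)).symm
    _ ≤ ENNReal.ofReal ((3:ℝ) ^ d * α * (2 ^ (1 + ε) / ε) * 2 ^ ε * A ^ ((d:ℝ) / α)) := by
        apply ENNReal.ofReal_le_ofReal
        calc (3:ℝ) ^ d * α * A * (2 ^ (1 + ε) / ε * (M:ℝ) ^ (-ε))
            = ((3:ℝ) ^ d * α * (2 ^ (1 + ε) / ε)) * (A * (M:ℝ) ^ (-ε)) := by ring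
          _ ≤ ((3:ℝ) ^ d * α * (2 ^ (1 + ε) / ε)) * (2 ^ ε * A ^ ((d:ℝ) / α)) := by
              apply mul_le_mul_of_nonneg_left hkey
              positivity
          _ = (3:ℝ) ^ d * α * (2 ^ (1 + ε) / ε) * 2 ^ ε * A ^ ((d:ℝ) / α) := by ring
/-- **(6.9).** For `d ≥ 1`, `α > d`, `λ > 0` there is a constant `c > 0` such that
for every probability space, every random variable `W ≥ 1` a.s. and all `w, u ≥ 1`:
`∑_{y ≠ 0} E[1{W ≥ u} (1 - exp(-λ w W ‖y‖^{-α}))] ≤ c w^{d/α} E[W^{d/α} 1{W ≥ u}]`. -/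
theorem stmt4 (d : ℕ) (hd : 1 ≤ d) (α lam : ℝ) (hα : (d : ℝ) < α) (hlam : 0 < lam) :
    ∃ c > (0 : ℝ),
      ∀ (Ω : Type) [MeasurableSpace Ω] (μ : Measure Ω) [IsProbabilityMeasure μ]
        (W : Ω → ℝ), Measurable W → (∀ᵐ ω ∂μ, 1 ≤ W ω) →
      ∀ w u : ℝ, 1 ≤ w → 1 ≤ u →
      (∑' y : {y : Fin d → ℤ // y ≠ 0},
          ∫⁻ ω, ENNReal.ofReal
            (if u ≤ W ω then 1 - Real.exp (-(lam * w * W ω * euclNorm y.1 ^ (-α)))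
             else 0) ∂μ)
        ≤ ENNReal.ofReal (c * w ^ ((d : ℝ) / α)) *
            ∫⁻ ω, ENNReal.ofReal (if u ≤ W ω then W ω ^ ((d : ℝ) / α) else 0) ∂μ := by
  obtain ⟨C, hC, hlatt⟩ := lattice_bound d hd α hα
  set L : ℝ := max lam 1 with hL
  have hL1 : (1:ℝ) ≤ L := le_max_right _ _
  have hL0 : (0:ℝ) < L := lt_of_lt_of_le zero_lt_one hL1
  have hd0 : (0:ℝ) < d := by
    have : 0 < d := hd
    exact_mod_cast this
  have hα0 : (0:ℝ) < α := lt_trans hd0 hα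
  refine ⟨C * L ^ ((d:ℝ) / α), by positivity, ?_⟩
  intro Ω _ μ _ W hW hW1 w u hw hu1
  have hw0 : (0:ℝ) < w := lt_of_lt_of_le zero_lt_one hw
  have hmeas : ∀ y : {y : Fin d → ℤ // y ≠ 0}, Measurable fun ω =>
      ENNReal.ofReal
        (if u ≤ W ω then 1 - Real.exp (-(lam * w * W ω * euclNorm y.1 ^ (-α))) else 0) := by
    intro y
    apply Measurable.ennreal_ofReal
    apply Measurable.ite (measurableSet_le measurable_const hW)
    · exact measurable_const.sub (((hW.const_mul (lam * w)).mul_const _).neg.exp)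
    · exact measurable_const
  rw [← lintegral_tsum (fun y => (hmeas y).aemeasurable)]
  rw [← lintegral_const_mul' _ _ ENNReal.ofReal_ne_top]
  apply lintegral_mono_ae
  filter_upwards [hW1] with ω hWω
  by_cases hcase : u ≤ W ω
  swap
  · simp [hcase]
  · set A1 : ℝ := L * w * W ω with hA1
    have hWpos : (0:ℝ) < W ω := lt_of_lt_of_le zero_lt_one hWω
    have hA1ge : (1:ℝ) ≤ A1 := by
      rw [hA1]
      have h1 : (1:ℝ) * 1 ≤ L * w := mul_le_mul hL1 hw zero_le_one hL0.le
      have h2 : (1:ℝ) * 1 ≤ L * w * W ω :=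
        mul_le_mul (by linarith) hWω zero_le_one (by positivity)
      linarith
    have hbound : ∀ y : {y : Fin d → ℤ // y ≠ 0},
        ENNReal.ofReal
          (if u ≤ W ω then 1 - Real.exp (-(lam * w * W ω * euclNorm y.1 ^ (-α))) else 0)
          ≤ ENNReal.ofReal (min 1 (A1 * euclNorm y.1 ^ (-α))) := by
      intro y
      rw [if_pos hcase]
      apply ENNReal.ofReal_le_ofReal
      have hs : (0:ℝ) ≤ euclNorm y.1 ^ (-α) := Real.rpow_nonneg (Real.sqrt_nonneg _) _
      have ht0 : 0 ≤ lam * w * W ω * euclNorm y.1 ^ (-α) := by positivity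
      calc 1 - Real.exp (-(lam * w * W ω * euclNorm y.1 ^ (-α)))
          ≤ min 1 (lam * w * W ω * euclNorm y.1 ^ (-α)) := exp_min_bound _ ht0
        _ ≤ min 1 (A1 * euclNorm y.1 ^ (-α)) := by
            apply min_le_min (le_refl 1)
            apply mul_le_mul_of_nonneg_right _ hs
            rw [hA1]
            exact mul_le_mul_of_nonneg_right
              (mul_le_mul_of_nonneg_right (le_max_left lam 1) hw0.le) hWpos.le
    calc (∑' y : {y : Fin d → ℤ // y ≠ 0}, ENNReal.ofReal
            (if u ≤ W ω then 1 - Real.exp (-(lam * w * W ω * euclNorm y.1 ^ (-α))) else 0))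
        ≤ ∑' y : {y : Fin d → ℤ // y ≠ 0},
            ENNReal.ofReal (min 1 (A1 * euclNorm y.1 ^ (-α))) := ENNReal.tsum_le_tsum hbound
      _ ≤ ENNReal.ofReal (C * A1 ^ ((d:ℝ) / α)) := hlatt A1 hA1ge
      _ ≤ ENNReal.ofReal (C * L ^ ((d:ℝ) / α) * w ^ ((d:ℝ) / α)) *
            ENNReal.ofReal (if u ≤ W ω then W ω ^ ((d:ℝ) / α) else 0) := by
          rw [if_pos hcase, ← ENNReal.ofReal_mul (by positivity)]
          apply ENNReal.ofReal_le_ofReal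
          apply le_of_eq
          rw [hA1, Real.mul_rpow (by positivity) hWpos.le,
            Real.mul_rpow hL0.le hw0.le]
          ring
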